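/- Let d : (R₀,∞) → [0,∞) be continuous with d(x_n) ≥ ε₀ along some sequence x_n → ∞, and suppose: (a) the set {x : d(x) > ε₀/10} has finite measure; (b) on any interval (x_R, x̄_R) where ε₀/10 ≤ d ≤ ε₀, one has d/dx [d(x)²] ≤ F(x) with ∫_{x_R}^{x̄_R} F(x) dx → 0 as x_R → ∞. Then one obtains a contradiction: for x_R large with d(x_R) ≤ ε₀/10 and x̄_R = inf{x > x_R : d(x) = ε₀}, the fundamental theorem of calculus gives (99/100)ε₀² = d(x̄_R)² − d(x_R)² ≤ ∫_{x_R}^{x̄_R} F → 0, which is impossible. Hence if such F exists with globally integrable total mass, then d(x) → 0 as x → ∞. -/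
import Mathlib


open MeasureTheory Filter

/-- Barrier argument for the modulation distance: if `d ≥ 0` is continuous on `(R₀,∞)`,
the set where `d` exceeds any fixed `ε > 0` has finite measure, and `x ↦ d(x)²` has a
derivative bounded by a function `F` that is integrable on `(R₀,∞)`, then `d(x) → 0`
as `x → ∞`. -/
theorem stmt13 (d F D : ℝ → ℝ) (R₀ : ℝ)
    (hd0 : ∀ x, 0 ≤ d x)
    (hdcont : ContinuousOn d (Set.Ioi R₀))
    (hderiv : ∀ x ∈ Set.Ioi R₀, HasDerivAt (fun t => d t ^ 2) (D x) x)
    (hDF : ∀ x ∈ Set.Ioi R₀, D x ≤ F x)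
    (hFint : IntegrableOn F (Set.Ioi R₀))
    (hsmall : ∀ ε : ℝ, 0 < ε → volume {x : ℝ | R₀ < x ∧ ε < d x} < ⊤) :
    Tendsto d atTop (nhds 0) := by
  set G : ℝ → ℝ := fun x => max (F x) 0 with hG
  have hGnn : ∀ x, 0 ≤ G x := fun x => le_max_right _ _
  have hGint : IntegrableOn G (Set.Ioi R₀) := hFint.pos_part
  -- tail integrals of G tend to 0
  have htail : Tendsto (fun R => ∫ t in Set.Ioi R, G t) atTop (nhds 0) := by
    have h1 : Tendsto (fun R => ∫ t in R₀..R, G t) atTop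
        (nhds (∫ t in Set.Ioi R₀, G t)) :=
      MeasureTheory.intervalIntegral_tendsto_integral_Ioi R₀ hGint tendsto_id
    have h2 : ∀ᶠ R in atTop, (∫ t in Set.Ioi R, G t)
        = (∫ t in Set.Ioi R₀, G t) - ∫ t in R₀..R, G t := by
      filter_upwards [eventually_ge_atTop R₀] with R hR
      have hunion : Set.Ioc R₀ R ∪ Set.Ioi R = Set.Ioi R₀ := Set.Ioc_union_Ioi_eq_Ioi hR
      have := MeasureTheory.setIntegral_union (μ := volume) (f := G)
        (Set.Ioc_disjoint_Ioi le_rfl) measurableSet_Ioi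
        (hGint.mono_set (by rw [← hunion]; exact Set.subset_union_left))
        (hGint.mono_set (by rw [← hunion]; exact Set.subset_union_right))
      rw [hunion] at this
      rw [intervalIntegral.integral_of_le hR]
      linarith
    have h3 := h1.const_sub (∫ t in Set.Ioi R₀, G t)
    simp only [sub_self] at h3
    exact Tendsto.congr' (h2.mono fun R h => h.symm) h3
  rw [Metric.tendsto_atTop]
  intro ε hε
  -- pick R₁ > R₀ with tail integral < ε²/2
  have hev : ∀ᶠ R in atTop, (∫ t in Set.Ioi R, G t) < ε ^ 2 / 2 := by
    have := htail.eventually (eventually_lt_nhds (by positivity : (0:ℝ) < ε ^ 2 / 2))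
    exact this
  obtain ⟨R₁, hR₁⟩ := (hev.and (eventually_gt_atTop R₀)).exists
  obtain ⟨hR₁tail, hR₁R₀⟩ := hR₁
  -- pick a > R₁ with d a ≤ ε/2
  have hS := hsmall (ε / 2) (by positivity)
  have ha : ∃ a, R₁ < a ∧ d a ≤ ε / 2 := by
    by_contra h
    push_neg at h
    have hsub : Set.Ioi R₁ ⊆ {x : ℝ | R₀ < x ∧ ε / 2 < d x} := by
      intro x hx
      exact ⟨lt_trans hR₁R₀ hx, h x hx⟩
    have := measure_mono (μ := volume) hsub
    rw [Real.volume_Ioi] at this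
    exact absurd (lt_of_le_of_lt this hS) (by simp)
  obtain ⟨a, haR₁, hda⟩ := ha
  have haR₀ : R₀ < a := lt_trans hR₁R₀ haR₁
  refine ⟨a, fun x hx => ?_⟩
  rcases eq_or_lt_of_le hx with rfl | hax
  · rw [Real.dist_eq, sub_zero, abs_of_nonneg (hd0 _)]
    linarith
  -- FTC inequality on [a, x]
  have hIcc : Set.Icc a x ⊆ Set.Ioi R₀ := fun t ht => lt_of_lt_of_le haR₀ ht.1
  have hftc : d x ^ 2 - d a ^ 2 ≤ ∫ t in a..x, G t := by
    apply intervalIntegral.sub_le_integral_of_hasDeriv_right_of_le hx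
    · exact ((hdcont.mono hIcc).pow 2)
    · intro t ht
      exact (hderiv t (hIcc ⟨ht.1.le, ht.2.le⟩)).hasDerivWithinAt
    · exact hGint.mono_set (by exact hIcc)
    · intro t ht
      exact le_trans (hDF t (hIcc ⟨ht.1.le, ht.2.le⟩)) (le_max_left _ _)
  have hGa : (∫ t in a..x, G t) ≤ ∫ t in Set.Ioi R₁, G t := by
    rw [intervalIntegral.integral_of_le hx.le]
    apply setIntegral_mono_set
    · exact hGint.mono_set (fun t ht => lt_trans hR₁R₀ ht)
    · exact Eventually.of_forall fun t => hGnn t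
    · exact Eventually.of_forall fun t ht => lt_of_lt_of_le haR₁ ht.1.le
  have hda2 : d a ^ 2 ≤ ε ^ 2 / 4 := by nlinarith [hd0 a]
  have hx2 : d x ^ 2 < ε ^ 2 := by nlinarith
  rw [Real.dist_eq, sub_zero, abs_of_nonneg (hd0 x)]
  nlinarith [hd0 x]
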